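/- Under the assumptions of the previous statement, if additionally $\|\mathbf{x}_{n+1} - (\mathbf{x}_n + \mathbf{d})\| \le \varrho_1/\nu_B$ where $B$ is $\nu_B$-Lipschitz, and $\mathbf{u}_n$ satisfies $\nabla B(\mathbf{x}_n)^\top \mathbf{d} \ge -\eta B(\mathbf{x}_n) + \tfrac{\nu}{2}\|\mathbf{d}\|^2 + \varrho_1$ with $0 < \eta \le 1$, then the true next state satisfies the barrier certificate $B(\mathbf{x}_{n+1}) - B(\mathbf{x}_n) \ge -\eta B(\mathbf{x}_n)$. -/

import Mathlib

open scoped RealInnerProductSpace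

/-- If the learned-model prediction satisfies the margin-`ϱ₁` barrier condition and the
true next state is within `ϱ₁/ν_B` of the prediction, the true next state satisfies the
discrete-time exponential barrier certificate. -/
theorem stmt_8 (nx : ℕ) (B : EuclideanSpace ℝ (Fin nx) → ℝ)
    (gradB : EuclideanSpace ℝ (Fin nx) → EuclideanSpace ℝ (Fin nx))
    (xn xn1 d : EuclideanSpace ℝ (Fin nx))
    (ν νB η ϱ1 : ℝ) (hν : 0 ≤ ν) (hνB : 0 < νB) (hϱ1 : 0 ≤ ϱ1)
    (hη : 0 < η ∧ η ≤ 1)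
    (hgrad : ∀ p ∈ segment ℝ xn (xn + d), HasGradientAt B (gradB p) p)
    (hlipgrad : ∀ p ∈ segment ℝ xn (xn + d), ∀ q ∈ segment ℝ xn (xn + d),
      ‖gradB p - gradB q‖ ≤ ν * ‖p - q‖)
    (hlipB : ∀ a b : EuclideanSpace ℝ (Fin nx), |B a - B b| ≤ νB * ‖a - b‖)
    (hclose : ‖xn1 - (xn + d)‖ ≤ ϱ1 / νB)
    (hctrl : ⟪gradB xn, d⟫ ≥ -η * B xn + ν / 2 * ‖d‖ ^ 2 + ϱ1) :
    B xn1 - B xn ≥ -η * B xn := by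
  set c : ℝ := ⟪gradB xn, d⟫ with hc
  -- the path
  set γ : ℝ → EuclideanSpace ℝ (Fin nx) := fun t => xn + t • d with hγ
  have hmem : ∀ t ∈ Set.Icc (0:ℝ) 1, γ t ∈ segment ℝ xn (xn + d) := by
    intro t ht
    rw [segment_eq_image' ℝ xn (xn + d)]
    exact ⟨t, ht, by simp [hγ]⟩
  have hxnmem : xn ∈ segment ℝ xn (xn + d) := left_mem_segment ℝ _ _
  -- B is continuous
  have hBlip : LipschitzWith (Real.toNNReal νB) B := by
    apply LipschitzWith.of_dist_le_mul
    intro a b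
    have := hlipB a b
    simpa [Real.dist_eq, dist_eq_norm, Real.coe_toNNReal _ hνB.le] using this
  -- the auxiliary function
  set ψ : ℝ → ℝ := fun t => B (γ t) + (ν / 2 * ‖d‖ ^ 2 * t ^ 2 - c * t) with hψ
  have hψderiv : ∀ t ∈ Set.Icc (0:ℝ) 1,
      HasDerivAt ψ (⟪gradB (γ t), d⟫ + (ν * ‖d‖ ^ 2 * t - c)) t := by
    intro t ht
    have hγd : HasDerivAt γ d t := by
      have := ((hasDerivAt_id t).smul_const d).const_add xn
      rw [one_smul] at this
      exact this
    have hB : HasDerivAt (fun t => B (γ t)) ⟪gradB (γ t), d⟫ t := by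
      have := ((hgrad (γ t) (hmem t ht)).hasFDerivAt).comp_hasDerivAt t hγd
      simp at this
      exact this
    have hpoly : HasDerivAt (fun t : ℝ => ν / 2 * ‖d‖ ^ 2 * t ^ 2 - c * t)
        (ν * ‖d‖ ^ 2 * t - c) t := by
      have h1 : HasDerivAt (fun t : ℝ => ν / 2 * ‖d‖ ^ 2 * t ^ 2)
          (ν / 2 * ‖d‖ ^ 2 * (2 * t ^ 1)) t := (hasDerivAt_pow 2 t).const_mul _
      have h2 : HasDerivAt (fun t : ℝ => c * t) c t := by
        simpa using (hasDerivAt_id t).const_mul c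
      have := h1.sub h2
      rw [show ν * ‖d‖ ^ 2 * t - c = ν / 2 * ‖d‖ ^ 2 * (2 * t ^ 1) - c by ring]
      exact this
    exact hB.add hpoly
  have hψnonneg : ∀ t ∈ Set.Icc (0:ℝ) 1,
      0 ≤ ⟪gradB (γ t), d⟫ + (ν * ‖d‖ ^ 2 * t - c) := by
    intro t ht
    have h1 : ‖gradB (γ t) - gradB xn‖ ≤ ν * (t * ‖d‖) := by
      have := hlipgrad (γ t) (hmem t ht) xn hxnmem
      have hnorm : ‖γ t - xn‖ = t * ‖d‖ := by
        simp [hγ, norm_smul, abs_of_nonneg ht.1]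
      rwa [hnorm] at this
    have h2 : ⟪gradB (γ t) - gradB xn, d⟫ ≥ -(ν * (t * ‖d‖) * ‖d‖) := by
      have := abs_real_inner_le_norm (gradB (γ t) - gradB xn) d
      have h3 : |⟪gradB (γ t) - gradB xn, d⟫| ≤ ν * (t * ‖d‖) * ‖d‖ :=
        this.trans (by
          have := mul_le_mul_of_nonneg_right h1 (norm_nonneg d)
          linarith)
      linarith [neg_abs_le ⟪gradB (γ t) - gradB xn, d⟫]
    have hinner : ⟪gradB (γ t) - gradB xn, d⟫ = ⟪gradB (γ t), d⟫ - c := by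
      simp [hc, inner_sub_left]
    rw [hinner] at h2
    nlinarith [sq_nonneg ‖d‖]
  have hmono : MonotoneOn ψ (Set.Icc (0:ℝ) 1) := by
    apply monotoneOn_of_hasDerivWithinAt_nonneg (convex_Icc 0 1)
    · apply ContinuousOn.add
      · exact (hBlip.continuous.comp (continuous_const.add (continuous_id.smul continuous_const) : Continuous γ)).continuousOn
      · fun_prop
    · intro t ht
      have ht' : t ∈ Set.Icc (0:ℝ) 1 := interior_subset ht
      exact (hψderiv t ht').hasDerivWithinAt
    · intro t ht
      exact hψnonneg t (interior_subset ht)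
  have key : ψ 0 ≤ ψ 1 :=
    hmono (by norm_num) (by norm_num) (by norm_num)
  have hψ0 : ψ 0 = B xn := by simp [hψ, hγ]
  have hψ1 : ψ 1 = B (xn + d) + (ν / 2 * ‖d‖ ^ 2 - c) := by simp [hψ, hγ]
  have hdescent : B (xn + d) - B xn ≥ c - ν / 2 * ‖d‖ ^ 2 := by
    rw [hψ0, hψ1] at key; linarith
  -- Lipschitz bound on the final step
  have hstep : |B xn1 - B (xn + d)| ≤ ϱ1 := by
    have h1 := hlipB xn1 (xn + d)
    have h2 : νB * ‖xn1 - (xn + d)‖ ≤ νB * (ϱ1 / νB) :=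
      mul_le_mul_of_nonneg_left hclose hνB.le
    have h3 : νB * (ϱ1 / νB) = ϱ1 := by field_simp
    linarith
  have hB1 : B xn1 ≥ B (xn + d) - ϱ1 := by
    have := abs_le.mp hstep
    linarith [this.1]
  linarith
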